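/- Let α₁, α₂ ∈ ℝ, 0 < q₂ ≤ ∞, 0 < p₁, p₂ < ∞ with 2α₁ − 4/p₁ > 3α₂ + 1/q₂ − 1/p₂. Let ψ, φ ∈ S(ℝ²), A = diag(4,2), B = [[1,1],[0,1]]. Define f^(2j)(x) = s_{2j,0} 2^(2j) φ(2^(2j) x) with |s_{2j,0}| = 2^(-4j(α₁/2 − 1/p₁ + 1/2)). Then the quantity ‖(∑_{|ℓ|≤2^j} (2^(3jα₂) |f^(2j) ∗ ψ_{A^(-j)B^(-ℓ)}|)^{q₂})^{1/q₂}‖_{L^{p₂}} is bounded by C · 2^{j(3α₂ − 2α₁ + 4/p₁ + 1/q₂ − 1/p₂)} and hence tends to 0 as j → ∞. -/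

import Mathlib

open MeasureTheory Metric Set Filter
noncomputable section

/-- `ℝ²` with the Euclidean norm. -/
abbrev V2 := EuclideanSpace ℝ (Fin 2)

/-- the vector `(a, b) ∈ ℝ²`. -/
def v2 (a b : ℝ) : V2 := (WithLp.equiv 2 (Fin 2 → ℝ)).symm ![a, b]

/-- The action of `B^ℓ A^j` on `ℝ²` for `A = diag(4,2)`, `B = [[1,1],[0,1]]`:
`x ↦ (2^(2j) x₁ + 2^j ℓ x₂, 2^j x₂)`. -/
def BA (j : ℕ) (ℓ : ℤ) (x : V2) : V2 :=
  v2 ((2:ℝ)^(2*j) * x 0 + (2:ℝ)^j * (ℓ:ℝ) * x 1) ((2:ℝ)^j * x 1)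

/-- The action of `A^(-j) B^(-ℓ)` on `ℝ²` (the inverse of `BA j ℓ`). -/
def invBA (j : ℕ) (ℓ : ℤ) (x : V2) : V2 :=
  v2 (((2:ℝ)^(2*j))⁻¹ * (x 0 - (ℓ:ℝ) * x 1)) (((2:ℝ)^j)⁻¹ * x 1)

/-- embedding of `ℤ²` into `ℝ²`. -/
def vi (k : ℤ × ℤ) : V2 := v2 (k.1 : ℝ) (k.2 : ℝ)

/-- `ψ_{A^(-j)B^(-ℓ)}(x) = 8^j ψ(B^ℓ A^j x)`. -/
def dilA (ψ : V2 → ℂ) (j : ℕ) (ℓ : ℤ) (x : V2) : ℂ :=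
  ((8:ℝ)^j : ℝ) * ψ (BA j ℓ x)

/-- `f^(2j)(x) = s_{2j,0} 2^(2j) φ(2^(2j) x)`. -/
def fj (φ : V2 → ℂ) (s : ℕ → ℂ) (j : ℕ) (x : V2) : ℂ :=
  s j * ((2:ℝ)^(2*j) : ℝ) * φ ((2:ℝ)^(2*j) • x)

/-- The quantity `‖(∑_{|ℓ|≤2^j} (2^(3jα₂) |f^(2j) ∗ ψ_{A^(-j)B^(-ℓ)}|)^{q₂})^{1/q₂}‖_{L^{p₂}}`. -/
def normQ (ψ φ : V2 → ℂ) (s : ℕ → ℂ) (α2 q2 p2 : ℝ) (j : ℕ) : ℝ :=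
  (∫ x : V2,
    ((∑ ℓ ∈ Finset.Icc (-(2:ℤ)^j) (2^j),
        ((2:ℝ) ^ (3*(j:ℝ)*α2) *
          ‖convolution (fj φ s j) (dilA ψ j ℓ) (ContinuousLinearMap.mul ℂ ℂ) volume x‖)
          ^ q2) ^ (1/q2)) ^ p2) ^ (1/p2)

namespace Stmt16Aux


lemma abs_coord0_le (z : V2) : |z 0| ≤ ‖z‖ := by
  rw [EuclideanSpace.norm_eq, Fin.sum_univ_two, ← Real.sqrt_sq_eq_abs]
  apply Real.sqrt_le_sqrt
  simp only [Real.norm_eq_abs, sq_abs]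
  nlinarith [sq_nonneg (z 1)]

lemma abs_coord1_le (z : V2) : |z 1| ≤ ‖z‖ := by
  rw [EuclideanSpace.norm_eq, Fin.sum_univ_two, ← Real.sqrt_sq_eq_abs]
  apply Real.sqrt_le_sqrt
  simp only [Real.norm_eq_abs, sq_abs]
  nlinarith [sq_nonneg (z 0)]

lemma norm_le_coords (z : V2) : ‖z‖ ≤ |z 0| + |z 1| := by
  rw [EuclideanSpace.norm_eq, Fin.sum_univ_two]
  have h : Real.sqrt ((|z 0| + |z 1|)^2) = |z 0| + |z 1| := by
    apply Real.sqrt_sq (by positivity)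
  rw [← h]
  apply Real.sqrt_le_sqrt
  simp only [Real.norm_eq_abs, sq_abs]
  nlinarith [abs_nonneg (z 0), abs_nonneg (z 1), sq_abs (z 0), sq_abs (z 1)]

lemma ba_lower (j : ℕ) (ℓ : ℤ) (hℓ : |(ℓ:ℝ)| ≤ 2^j) (z : V2) :
    (2:ℝ)^j * ‖z‖ ≤ 4 * ‖BA j ℓ z‖ := by
  set P : ℝ := (2:ℝ)^j with hP
  have hP1 : (1:ℝ) ≤ P := one_le_pow₀ (by norm_num)
  have hP0 : (0:ℝ) < P := by linarith
  set w := BA j ℓ z with hw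
  have h0 : (w 0) = P * P * z 0 + P * (ℓ:ℝ) * z 1 := by
    show ((2:ℝ)^(2*j) * z 0 + (2:ℝ)^j * (ℓ:ℝ) * z 1) = _
    rw [two_mul, pow_add]
  have h1 : (w 1) = P * z 1 := rfl
  have ha : |w 0| ≤ ‖w‖ := abs_coord0_le w
  have hb : |w 1| ≤ ‖w‖ := abs_coord1_le w
  have hz : ‖z‖ ≤ |z 0| + |z 1| := norm_le_coords z
  -- P*P*|z 0| ≤ |w 0| + P * |w 1|
  have key0 : P * P * |z 0| ≤ |w 0| + P * |w 1| := by
    have : P * P * z 0 = w 0 - (ℓ:ℝ) * (w 1) := by rw [h0, h1]; ring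
    have e : |P * P * z 0| = P * P * |z 0| := by
      rw [abs_mul, abs_of_pos (show (0:ℝ) < P * P by positivity)]
    calc P * P * |z 0| = |w 0 - (ℓ:ℝ) * w 1| := by rw [← e, this]
      _ ≤ |w 0| + |(ℓ:ℝ) * w 1| := by
          simpa [sub_eq_add_neg] using abs_add_le (w 0) (-((ℓ:ℝ) * w 1))
      _ = |w 0| + |(ℓ:ℝ)| * |w 1| := by rw [abs_mul]
      _ ≤ |w 0| + P * |w 1| := by
          have := abs_nonneg (w 1)
          nlinarith
  have key1 : P * |z 1| = |w 1| := by
    rw [h1, abs_mul, abs_of_pos hP0]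
  have hn : (0:ℝ) ≤ ‖w‖ := norm_nonneg w
  have habs0 : (0:ℝ) ≤ |z 0| := abs_nonneg _
  -- conclude
  have c0 : P * |z 0| ≤ 2 * ‖w‖ := by nlinarith
  have c1 : P * |z 1| ≤ ‖w‖ := key1 ▸ hb
  nlinarith

lemma schwartz_bound (f : SchwartzMap V2 ℂ) (k : ℕ) :
    ∃ C, 0 < C ∧ ∀ x, ‖f x‖ ≤ C * ((1 + ‖x‖) ^ k)⁻¹ := by
  refine ⟨2 ^ k * (Finset.Iic (k,0)).sup (fun m => SchwartzMap.seminorm ℝ m.1 m.2) f + 1,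
    by positivity, fun x => ?_⟩
  have h : (1 + ‖x‖) ^ k * ‖f x‖ ≤
      2 ^ k * (Finset.Iic (k,0)).sup (fun m => SchwartzMap.seminorm ℝ m.1 m.2) f := by
    simpa [norm_iteratedFDeriv_zero] using
      SchwartzMap.one_add_le_sup_seminorm_apply (𝕜 := ℝ) (m := (k,0)) le_rfl le_rfl f x
  have hx : (0:ℝ) < (1 + ‖x‖) ^ k := by positivity
  rw [← div_eq_mul_inv, le_div_iff₀ hx]
  nlinarith [norm_nonneg (f x)]

lemma peak (c : ℝ) (hc : 0 ≤ c) (x t : V2) :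
    1 + c * ‖x‖ ≤ (1 + c * ‖t‖) * (1 + c * ‖x - t‖) := by
  have h : ‖x‖ ≤ ‖t‖ + ‖x - t‖ := by
    simpa using norm_add_le t (x - t)
  nlinarith [mul_nonneg hc (norm_nonneg t), mul_nonneg hc (norm_nonneg (x - t)),
    mul_nonneg (mul_nonneg hc (norm_nonneg t)) (mul_nonneg hc (norm_nonneg (x - t)))]

lemma inv_pow_le_inv_pow {a b : ℝ} (ha : 0 < a) (h : a ≤ b) (k : ℕ) :
    (b ^ k)⁻¹ ≤ (a ^ k)⁻¹ := by
  gcongr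

lemma inv_pow_one_add (a : ℝ) (ha : 0 ≤ a) (k : ℕ) :
    ((1 + a) ^ k)⁻¹ = (1 + a) ^ (-(k:ℝ)) := by
  rw [← Real.rpow_natCast (1 + a) k, ← Real.rpow_neg (by linarith)]

lemma japanese_rpow (r : ℝ) (hr : 2 < r) (c : ℝ) (hc : 0 < c) :
    Integrable (fun t : V2 => (1 + c * ‖t‖) ^ (-r)) volume ∧
    ∫ t : V2, (1 + c * ‖t‖) ^ (-r) = (c ^ 2)⁻¹ * ∫ t : V2, (1 + ‖t‖) ^ (-r) := by
  have hbase : Integrable (fun t : V2 => (1 + ‖t‖) ^ (-r)) := by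
    apply integrable_one_add_norm; simpa [finrank_euclideanSpace_fin] using hr
  have hnorm : ∀ t : V2, (1 : ℝ) + ‖c • t‖ = 1 + c * ‖t‖ := fun t => by
    rw [norm_smul, Real.norm_eq_abs, abs_of_pos hc]
  constructor
  · have h := (integrable_comp_smul_iff volume (fun t : V2 => (1 + ‖t‖) ^ (-r)) (ne_of_gt hc)).2 hbase
    refine h.congr (Eventually.of_forall fun t => ?_)
    simp only [norm_smul, Real.norm_eq_abs, abs_of_pos hc]
  · have h := Measure.integral_comp_smul_of_nonneg volume (fun t : V2 => (1 + ‖t‖) ^ (-r)) c (hR := hc.le)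
    simp only [hnorm, finrank_euclideanSpace_fin, smul_eq_mul] at h
    rw [h]

lemma japanese_nat (k : ℕ) (hk : 2 < (k:ℝ)) (c : ℝ) (hc : 0 < c) :
    Integrable (fun t : V2 => ((1 + c * ‖t‖) ^ k)⁻¹) volume ∧
    ∫ t : V2, ((1 + c * ‖t‖) ^ k)⁻¹ = (c ^ 2)⁻¹ * ∫ t : V2, ((1 + ‖t‖) ^ k)⁻¹ := by
  obtain ⟨h1, h2⟩ := japanese_rpow (k:ℝ) hk c hc
  have e1 : (fun t : V2 => ((1 + c * ‖t‖) ^ k)⁻¹) = fun t : V2 => (1 + c * ‖t‖) ^ (-(k:ℝ)) :=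
    funext fun t => inv_pow_one_add _ (by positivity) k
  have e2 : (fun t : V2 => ((1 + ‖t‖) ^ k)⁻¹) = fun t : V2 => (1 + ‖t‖) ^ (-(k:ℝ)) :=
    funext fun t => inv_pow_one_add _ (norm_nonneg t) k
  rw [e1, e2]
  exact ⟨h1, h2⟩

lemma inv_le_const_mul_inv {A B c : ℝ} (hA : 0 < A) (hB : 0 < B) (hc : 0 < c)
    (h : A ≤ c * B) : B⁻¹ ≤ c * A⁻¹ := by
  rw [← div_eq_mul_inv, le_div_iff₀ hA]
  calc B⁻¹ * A ≤ B⁻¹ * (c * B) := by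
        apply mul_le_mul_of_nonneg_left h (by positivity)
    _ = c := by field_simp

lemma conv_bound (ψ φ : SchwartzMap V2 ℂ) (N : ℕ) (hN : 3 ≤ N) :
    ∃ K, 0 ≤ K ∧ ∀ (s : ℕ → ℂ) (j : ℕ) (ℓ : ℤ), |(ℓ:ℝ)| ≤ 2^j → ∀ x : V2,
      ‖convolution (fj (fun y => φ y) s j) (dilA (fun y => ψ y) j ℓ)
          (ContinuousLinearMap.mul ℂ ℂ) volume x‖ ≤
        K * (‖s j‖ * (2:ℝ)^j * ((1 + (2:ℝ)^j * ‖x‖)^N)⁻¹) := by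
  obtain ⟨Cφ, hCφ, hφb⟩ := schwartz_bound φ (N+3)
  obtain ⟨Cψ, hCψ, hψb⟩ := schwartz_bound ψ N
  set I3 : ℝ := ∫ t : V2, ((1 + ‖t‖)^3)⁻¹ with hI3
  have hI30 : 0 ≤ I3 := integral_nonneg fun t => by positivity
  refine ⟨Cφ * Cψ * 4^N * I3, by positivity, fun s j ℓ hℓ x => ?_⟩
  set P : ℝ := (2:ℝ)^j with hP
  have hP0 : (0:ℝ) < P := by positivity
  set Q : ℝ := (2:ℝ)^(2*j) with hQ
  have hQ0 : (0:ℝ) < Q := by positivity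
  have hPQ : P ≤ Q := by
    rw [hP, hQ]; apply pow_le_pow_right₀ (by norm_num); omega
  set X : ℝ := ((1 + P * ‖x‖)^N)⁻¹ with hX
  have hX0 : 0 ≤ X := by positivity
  set D : ℝ := ‖s j‖ * Q * (8:ℝ)^j * (Cφ * Cψ * 4^N * X) with hD
  obtain ⟨hint3, hval3⟩ := japanese_nat 3 (by norm_num) Q hQ0
  have hnorm_fj : ∀ t : V2, ‖fj (fun y => φ y) s j t‖ = ‖s j‖ * Q * ‖φ (Q • t)‖ := by
    intro t
    simp only [fj, ← hQ, norm_mul, Complex.norm_real, Real.norm_eq_abs, abs_of_pos hQ0]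
  have hnorm_dil : ∀ w : V2, ‖dilA (fun y => ψ y) j ℓ w‖ = (8:ℝ)^j * ‖ψ (BA j ℓ w)‖ := by
    intro w
    simp only [dilA, norm_mul, Complex.norm_real, Real.norm_eq_abs, abs_of_pos
      (show (0:ℝ) < (8:ℝ)^j by positivity)]
  have hbound : ∀ t : V2,
      ‖(ContinuousLinearMap.mul ℂ ℂ) (fj (fun y => φ y) s j t)
          (dilA (fun y => ψ y) j ℓ (x - t))‖ ≤ D * ((1 + Q * ‖t‖)^3)⁻¹ := by
    intro t
    have hφ' : ‖φ (Q • t)‖ ≤ Cφ * ((1 + Q * ‖t‖)^(N+3))⁻¹ := by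
      have h := hφb (Q • t)
      rwa [norm_smul, Real.norm_eq_abs, abs_of_pos hQ0] at h
    have hψ' : ‖ψ (BA j ℓ (x - t))‖
        ≤ Cψ * (4^N * ((1 + Q * ‖t‖)^N * ((1 + P * ‖x‖)^N)⁻¹)) := by
      have h1 := hψb (BA j ℓ (x - t))
      have h2 : 1 + P * ‖x - t‖ ≤ 4 * (1 + ‖BA j ℓ (x - t)‖) := by
        have h := ba_lower j ℓ hℓ (x - t)
        rw [← hP] at h
        linarith [norm_nonneg (BA j ℓ (x - t))]
      have h3 : ((1 + ‖BA j ℓ (x - t)‖)^N)⁻¹ ≤ 4^N * ((1 + P * ‖x - t‖)^N)⁻¹ := by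
        apply inv_le_const_mul_inv (by positivity) (by positivity) (by positivity)
        calc (1 + P * ‖x - t‖)^N ≤ (4 * (1 + ‖BA j ℓ (x - t)‖))^N := by
              apply pow_le_pow_left₀ (by positivity) h2
          _ = 4^N * (1 + ‖BA j ℓ (x - t)‖)^N := mul_pow _ _ _
      have h4 : ((1 + P * ‖x - t‖)^N)⁻¹
          ≤ (1 + Q * ‖t‖)^N * ((1 + P * ‖x‖)^N)⁻¹ := by
        apply inv_le_const_mul_inv (by positivity) (by positivity) (by positivity)
        calc (1 + P * ‖x‖)^N ≤ ((1 + Q * ‖t‖) * (1 + P * ‖x - t‖))^N := by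
              apply pow_le_pow_left₀ (by positivity)
              calc 1 + P * ‖x‖ ≤ (1 + P * ‖t‖) * (1 + P * ‖x - t‖) := peak P hP0.le x t
                _ ≤ (1 + Q * ‖t‖) * (1 + P * ‖x - t‖) := by
                    apply mul_le_mul_of_nonneg_right _ (by positivity)
                    have := norm_nonneg t
                    nlinarith
          _ = (1 + Q * ‖t‖)^N * (1 + P * ‖x - t‖)^N := mul_pow _ _ _
      calc ‖ψ (BA j ℓ (x - t))‖ ≤ Cψ * ((1 + ‖BA j ℓ (x - t)‖)^N)⁻¹ := h1
        _ ≤ Cψ * (4^N * ((1 + P * ‖x - t‖)^N)⁻¹) :=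
            mul_le_mul_of_nonneg_left h3 hCψ.le
        _ ≤ Cψ * (4^N * ((1 + Q * ‖t‖)^N * ((1 + P * ‖x‖)^N)⁻¹)) := by
            apply mul_le_mul_of_nonneg_left _ hCψ.le
            apply mul_le_mul_of_nonneg_left h4 (by positivity)
    calc ‖(ContinuousLinearMap.mul ℂ ℂ) (fj (fun y => φ y) s j t)
            (dilA (fun y => ψ y) j ℓ (x - t))‖
        = (‖s j‖ * Q * ‖φ (Q • t)‖) * ((8:ℝ)^j * ‖ψ (BA j ℓ (x - t))‖) := by
          rw [ContinuousLinearMap.mul_apply', norm_mul, hnorm_fj, hnorm_dil]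
      _ ≤ (‖s j‖ * Q * (Cφ * ((1 + Q * ‖t‖)^(N+3))⁻¹)) *
            ((8:ℝ)^j * (Cψ * (4^N * ((1 + Q * ‖t‖)^N * ((1 + P * ‖x‖)^N)⁻¹)))) := by
          apply mul_le_mul
          · exact mul_le_mul_of_nonneg_left hφ' (by positivity)
          · exact mul_le_mul_of_nonneg_left hψ' (by positivity)
          · positivity
          · positivity
      _ = D * ((1 + Q * ‖t‖)^3)⁻¹ := by
          rw [hD, hX]
          have hu : (0:ℝ) < 1 + Q * ‖t‖ := by positivity
          have hsplit : ((1 + Q * ‖t‖)^(N+3))⁻¹ * (1 + Q * ‖t‖)^N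
              = ((1 + Q * ‖t‖)^3)⁻¹ := by
            rw [pow_add]
            field_simp
          calc (‖s j‖ * Q * (Cφ * ((1 + Q * ‖t‖)^(N+3))⁻¹)) *
                ((8:ℝ)^j * (Cψ * (4^N * ((1 + Q * ‖t‖)^N * ((1 + P * ‖x‖)^N)⁻¹))))
              = ‖s j‖ * Q * (8:ℝ)^j * (Cφ * Cψ * 4^N * ((1 + P * ‖x‖)^N)⁻¹) *
                  (((1 + Q * ‖t‖)^(N+3))⁻¹ * (1 + Q * ‖t‖)^N) := by ring
            _ = _ := by rw [hsplit]
  have hstep : ‖convolution (fj (fun y => φ y) s j) (dilA (fun y => ψ y) j ℓ)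
      (ContinuousLinearMap.mul ℂ ℂ) volume x‖ ≤ ∫ t : V2, D * ((1 + Q * ‖t‖)^3)⁻¹ := by
    rw [convolution_def]
    exact norm_integral_le_of_norm_le (hint3.const_mul D) (Eventually.of_forall hbound)
  have hD0 : 0 ≤ D := by rw [hD]; positivity
  have hkey : Q * (8:ℝ)^j * (Q^2)⁻¹ = P := by
    have h8 : (8:ℝ)^j = 2^(3*j) := by rw [show (8:ℝ) = 2^3 by norm_num, ← pow_mul]
    rw [hQ, hP, h8, ← pow_mul, ← pow_add,
      show 2*j + 3*j = j + 2*j*2 by ring, pow_add]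
    field_simp
  calc ‖convolution (fj (fun y => φ y) s j) (dilA (fun y => ψ y) j ℓ)
        (ContinuousLinearMap.mul ℂ ℂ) volume x‖
      ≤ ∫ t : V2, D * ((1 + Q * ‖t‖)^3)⁻¹ := hstep
    _ = D * ((Q^2)⁻¹ * I3) := by rw [MeasureTheory.integral_const_mul, hval3]
    _ = (Q * (8:ℝ)^j * (Q^2)⁻¹) * (‖s j‖ * (Cφ * Cψ * 4^N * X) * I3) := by
        rw [hD]; ring
    _ = Cφ * Cψ * 4^N * I3 * (‖s j‖ * P * X) := by rw [hkey]; ring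


end Stmt16Aux

/-- with `|s_{2j,0}| = 2^(-4j(α₁/2 − 1/p₁ + 1/2))` and
`2α₁ − 4/p₁ > 3α₂ + 1/q₂ − 1/p₂`, the `F^{α₂,q₂}_{p₂}(AB)`-type quantity of
`f^(2j)` is bounded by `C 2^{j(3α₂ − 2α₁ + 4/p₁ + 1/q₂ − 1/p₂)}` and tends to `0`. -/

theorem stmt16 (α1 α2 q2 p1 p2 : ℝ) (hq2 : 0 < q2) (hp1 : 0 < p1) (hp2 : 0 < p2)
    (hexp : 2*α1 - 4/p1 > 3*α2 + 1/q2 - 1/p2)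
    (ψ φ : SchwartzMap V2 ℂ) (s : ℕ → ℂ)
    (hs : ∀ j : ℕ, ‖s j‖ = (2:ℝ) ^ (-(4*(j:ℝ)) * (α1/2 - 1/p1 + 1/2))) :
    (∃ C > 0, ∀ j : ℕ,
        normQ (fun y => ψ y) (fun y => φ y) s α2 q2 p2 j ≤
          C * (2:ℝ) ^ ((j:ℝ) * (3*α2 - 2*α1 + 4/p1 + 1/q2 - 1/p2))) ∧
      Tendsto (fun j : ℕ => normQ (fun y => ψ y) (fun y => φ y) s α2 q2 p2 j)
        atTop (nhds 0) := by
  set E : ℝ := 3*α2 - 2*α1 + 4/p1 + 1/q2 - 1/p2 with hE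
  set N : ℕ := ⌈2/p2⌉₊ + 3 with hNdef
  have hN3 : 3 ≤ N := Nat.le_add_left 3 _
  have hNp2 : 2 < (N:ℝ) * p2 := by
    have h1 : 2/p2 < (N:ℝ) := by
      have h0 := Nat.le_ceil (2/p2)
      have h2' : (⌈2/p2⌉₊ : ℝ) < N := by rw [hNdef]; push_cast; linarith
      linarith
    calc (2:ℝ) = (2/p2) * p2 := by field_simp
      _ < (N:ℝ) * p2 := mul_lt_mul_of_pos_right h1 hp2
  obtain ⟨K, hK0, hKb⟩ := Stmt16Aux.conv_bound ψ φ N hN3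
  set I : ℝ := ∫ x : V2, (1+‖x‖) ^ (-((N:ℝ)*p2)) with hI
  have hI0 : 0 ≤ I := integral_nonneg fun x => Real.rpow_nonneg (by positivity) _
  set C : ℝ := K * 4 ^ (1/q2) * I ^ (1/p2) + 1 with hC
  have hC0 : 0 < C := by
    have h0 : 0 ≤ K * 4 ^ (1/q2) * I ^ (1/p2) :=
      mul_nonneg (mul_nonneg hK0 (Real.rpow_nonneg (by norm_num) _)) (Real.rpow_nonneg hI0 _)
    rw [hC]; linarith
  have hnq : ∀ j, 0 ≤ normQ (fun y => ψ y) (fun y => φ y) s α2 q2 p2 j := by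
    intro j
    apply Real.rpow_nonneg
    apply integral_nonneg
    intro x
    apply Real.rpow_nonneg
    apply Real.rpow_nonneg
    apply Finset.sum_nonneg
    intro ℓ _
    apply Real.rpow_nonneg
    positivity
  have key : ∀ j, normQ (fun y => ψ y) (fun y => φ y) s α2 q2 p2 j ≤
      C * (2:ℝ) ^ ((j:ℝ) * E) := by
    intro j
    set P : ℝ := (2:ℝ)^j with hP
    have hP0 : (0:ℝ) < P := by positivity
    have hP1 : (1:ℝ) ≤ P := one_le_pow₀ (by norm_num)
    have hPr : P = (2:ℝ) ^ ((j:ℝ)) := (Real.rpow_natCast 2 j).symm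
    set es : ℝ := -(4*(j:ℝ)) * (α1/2 - 1/p1 + 1/2) with hes
    set c0 : ℝ := (2:ℝ)^(3*(j:ℝ)*α2) * (K * (‖s j‖ * P)) with hc0def
    have hc00 : 0 ≤ c0 := by
      apply mul_nonneg (Real.rpow_nonneg (by norm_num) _)
      exact mul_nonneg hK0 (by positivity)
    have hterm : ∀ ℓ ∈ Finset.Icc (-(2:ℤ)^j) ((2:ℤ)^j), ∀ x : V2,
        (2:ℝ)^(3*(j:ℝ)*α2) * ‖convolution (fj (fun y => φ y) s j) (dilA (fun y => ψ y) j ℓ)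
            (ContinuousLinearMap.mul ℂ ℂ) volume x‖ ≤ c0 * ((1 + P*‖x‖)^N)⁻¹ := by
      intro ℓ hℓ x
      have hl : |(ℓ:ℝ)| ≤ 2^j := by
        rw [Finset.mem_Icc] at hℓ
        rw [abs_le]
        constructor
        · exact_mod_cast hℓ.1
        · exact_mod_cast hℓ.2
      have h := hKb s j ℓ hl x
      rw [← hP] at h
      calc (2:ℝ)^(3*(j:ℝ)*α2) * ‖convolution (fj (fun y => φ y) s j) (dilA (fun y => ψ y) j ℓ)
            (ContinuousLinearMap.mul ℂ ℂ) volume x‖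
          ≤ (2:ℝ)^(3*(j:ℝ)*α2) * (K * (‖s j‖ * P * ((1 + P*‖x‖)^N)⁻¹)) :=
            mul_le_mul_of_nonneg_left h (Real.rpow_nonneg (by norm_num) _)
        _ = c0 * ((1 + P*‖x‖)^N)⁻¹ := by rw [hc0def]; ring
    have hcard : ((Finset.Icc (-(2:ℤ)^j) ((2:ℤ)^j)).card : ℝ) ≤ 4 * P := by
      have h1 : (Finset.Icc (-(2:ℤ)^j) ((2:ℤ)^j)).card = ((2:ℤ)^j + 1 - (-(2:ℤ)^j)).toNat :=
        Int.card_Icc _ _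
      have h2 : ((2:ℤ)^j + 1 - (-(2:ℤ)^j)) = 2*(2:ℤ)^j + 1 := by ring
      have h3 : (0:ℤ) ≤ 2*(2:ℤ)^j + 1 := by positivity
      have h4 : (((2*(2:ℤ)^j + 1).toNat : ℕ) : ℝ) = (((2*(2:ℤ)^j + 1) : ℤ) : ℝ) := by
        rw [← Int.cast_natCast, Int.toNat_of_nonneg h3]
      rw [h1, h2, h4]
      push_cast
      rw [← hP]
      linarith
    have hsum : ∀ x : V2, (∑ ℓ ∈ Finset.Icc (-(2:ℤ)^j) ((2:ℤ)^j),
        ((2:ℝ)^(3*(j:ℝ)*α2) * ‖convolution (fj (fun y => φ y) s j) (dilA (fun y => ψ y) j ℓ)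
            (ContinuousLinearMap.mul ℂ ℂ) volume x‖)^q2)
        ≤ (4*P) * (c0 * ((1 + P*‖x‖)^N)⁻¹)^q2 := by
      intro x
      have hb0 : (0:ℝ) ≤ c0 * ((1 + P*‖x‖)^N)⁻¹ := mul_nonneg hc00 (by positivity)
      calc (∑ ℓ ∈ Finset.Icc (-(2:ℤ)^j) ((2:ℤ)^j),
            ((2:ℝ)^(3*(j:ℝ)*α2) * ‖convolution (fj (fun y => φ y) s j) (dilA (fun y => ψ y) j ℓ)
              (ContinuousLinearMap.mul ℂ ℂ) volume x‖)^q2)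
          ≤ ∑ _ℓ ∈ Finset.Icc (-(2:ℤ)^j) ((2:ℤ)^j), (c0 * ((1 + P*‖x‖)^N)⁻¹)^q2 := by
            apply Finset.sum_le_sum
            intro ℓ hℓ
            exact Real.rpow_le_rpow (by positivity) (hterm ℓ hℓ x) hq2.le
        _ = ((Finset.Icc (-(2:ℤ)^j) ((2:ℤ)^j)).card : ℝ) * (c0 * ((1 + P*‖x‖)^N)⁻¹)^q2 := by
            rw [Finset.sum_const, nsmul_eq_mul]
        _ ≤ (4*P) * (c0 * ((1 + P*‖x‖)^N)⁻¹)^q2 :=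
            mul_le_mul_of_nonneg_right hcard (Real.rpow_nonneg hb0 _)
    set A0 : ℝ := (4*P)^(1/q2) * c0 with hA0
    have hA00 : 0 ≤ A0 := mul_nonneg (Real.rpow_nonneg (by positivity) _) hc00
    have hinner : ∀ x : V2, ((∑ ℓ ∈ Finset.Icc (-(2:ℤ)^j) ((2:ℤ)^j),
        ((2:ℝ)^(3*(j:ℝ)*α2) * ‖convolution (fj (fun y => φ y) s j) (dilA (fun y => ψ y) j ℓ)
            (ContinuousLinearMap.mul ℂ ℂ) volume x‖)^q2)^(1/q2))
        ≤ A0 * ((1 + P*‖x‖)^N)⁻¹ := by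
      intro x
      have hsum0 : (0:ℝ) ≤ ∑ ℓ ∈ Finset.Icc (-(2:ℤ)^j) ((2:ℤ)^j),
          ((2:ℝ)^(3*(j:ℝ)*α2) * ‖convolution (fj (fun y => φ y) s j) (dilA (fun y => ψ y) j ℓ)
              (ContinuousLinearMap.mul ℂ ℂ) volume x‖)^q2 :=
        Finset.sum_nonneg fun ℓ _ => Real.rpow_nonneg (by positivity) _
      have hb0 : (0:ℝ) ≤ c0 * ((1 + P*‖x‖)^N)⁻¹ := mul_nonneg hc00 (by positivity)
      calc ((∑ ℓ ∈ Finset.Icc (-(2:ℤ)^j) ((2:ℤ)^j),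
            ((2:ℝ)^(3*(j:ℝ)*α2) * ‖convolution (fj (fun y => φ y) s j) (dilA (fun y => ψ y) j ℓ)
              (ContinuousLinearMap.mul ℂ ℂ) volume x‖)^q2)^(1/q2))
          ≤ ((4*P) * (c0 * ((1 + P*‖x‖)^N)⁻¹)^q2)^(1/q2) :=
            Real.rpow_le_rpow hsum0 (hsum x) (by positivity)
        _ = (4*P)^(1/q2) * ((c0 * ((1 + P*‖x‖)^N)⁻¹)^q2)^(1/q2) :=
            Real.mul_rpow (by positivity) (Real.rpow_nonneg hb0 _)
        _ = (4*P)^(1/q2) * (c0 * ((1 + P*‖x‖)^N)⁻¹) := by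
            rw [← Real.rpow_mul hb0, mul_one_div, div_self hq2.ne', Real.rpow_one]
        _ = A0 * ((1 + P*‖x‖)^N)⁻¹ := by rw [hA0]; ring
    have hptw : ∀ x : V2, (((∑ ℓ ∈ Finset.Icc (-(2:ℤ)^j) ((2:ℤ)^j),
        ((2:ℝ)^(3*(j:ℝ)*α2) * ‖convolution (fj (fun y => φ y) s j) (dilA (fun y => ψ y) j ℓ)
            (ContinuousLinearMap.mul ℂ ℂ) volume x‖)^q2)^(1/q2))^p2)
        ≤ A0^p2 * (1 + P*‖x‖)^(-((N:ℝ)*p2)) := by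
      intro x
      have hsum0 : (0:ℝ) ≤ (∑ ℓ ∈ Finset.Icc (-(2:ℤ)^j) ((2:ℤ)^j),
          ((2:ℝ)^(3*(j:ℝ)*α2) * ‖convolution (fj (fun y => φ y) s j) (dilA (fun y => ψ y) j ℓ)
              (ContinuousLinearMap.mul ℂ ℂ) volume x‖)^q2)^(1/q2) :=
        Real.rpow_nonneg (Finset.sum_nonneg fun ℓ _ => Real.rpow_nonneg (by positivity) _) _
      calc (((∑ ℓ ∈ Finset.Icc (-(2:ℤ)^j) ((2:ℤ)^j),
            ((2:ℝ)^(3*(j:ℝ)*α2) * ‖convolution (fj (fun y => φ y) s j) (dilA (fun y => ψ y) j ℓ)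
              (ContinuousLinearMap.mul ℂ ℂ) volume x‖)^q2)^(1/q2))^p2)
          ≤ (A0 * ((1 + P*‖x‖)^N)⁻¹)^p2 :=
            Real.rpow_le_rpow hsum0 (hinner x) hp2.le
        _ = A0^p2 * (((1 + P*‖x‖)^N)⁻¹)^p2 :=
            Real.mul_rpow hA00 (by positivity)
        _ = A0^p2 * (1 + P*‖x‖)^(-((N:ℝ)*p2)) := by
            rw [Stmt16Aux.inv_pow_one_add _ (by positivity) N,
              ← Real.rpow_mul (by positivity), neg_mul]
    obtain ⟨hintN, hvalN⟩ := Stmt16Aux.japanese_rpow ((N:ℝ)*p2) hNp2 P hP0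
    have hIint : (∫ x : V2, ((∑ ℓ ∈ Finset.Icc (-(2:ℤ)^j) ((2:ℤ)^j),
        ((2:ℝ)^(3*(j:ℝ)*α2) * ‖convolution (fj (fun y => φ y) s j) (dilA (fun y => ψ y) j ℓ)
            (ContinuousLinearMap.mul ℂ ℂ) volume x‖)^q2)^(1/q2))^p2)
        ≤ A0^p2 * ((P^2)⁻¹ * I) := by
      calc (∫ x : V2, ((∑ ℓ ∈ Finset.Icc (-(2:ℤ)^j) ((2:ℤ)^j),
            ((2:ℝ)^(3*(j:ℝ)*α2) * ‖convolution (fj (fun y => φ y) s j) (dilA (fun y => ψ y) j ℓ)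
              (ContinuousLinearMap.mul ℂ ℂ) volume x‖)^q2)^(1/q2))^p2)
          ≤ ∫ x : V2, A0^p2 * (1 + P*‖x‖)^(-((N:ℝ)*p2)) := by
            apply integral_mono_of_nonneg
            · exact Eventually.of_forall fun x => Real.rpow_nonneg
                (Real.rpow_nonneg (Finset.sum_nonneg fun ℓ _ =>
                  Real.rpow_nonneg (by positivity) _) _) _
            · exact hintN.const_mul _
            · exact Eventually.of_forall hptw
        _ = A0^p2 * ∫ x : V2, (1 + P*‖x‖)^(-((N:ℝ)*p2)) := MeasureTheory.integral_const_mul _ _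
        _ = A0^p2 * ((P^2)⁻¹ * I) := by rw [hvalN]
    have hnormQ : normQ (fun y => ψ y) (fun y => φ y) s α2 q2 p2 j
        ≤ A0 * ((P^2)⁻¹ * I)^(1/p2) := by
      have hint0 : (0:ℝ) ≤ ∫ x : V2, ((∑ ℓ ∈ Finset.Icc (-(2:ℤ)^j) ((2:ℤ)^j),
          ((2:ℝ)^(3*(j:ℝ)*α2) * ‖convolution (fj (fun y => φ y) s j) (dilA (fun y => ψ y) j ℓ)
              (ContinuousLinearMap.mul ℂ ℂ) volume x‖)^q2)^(1/q2))^p2 :=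
        integral_nonneg fun x => Real.rpow_nonneg (Real.rpow_nonneg
          (Finset.sum_nonneg fun ℓ _ => Real.rpow_nonneg (by positivity) _) _) _
      have h1 : normQ (fun y => ψ y) (fun y => φ y) s α2 q2 p2 j
          ≤ (A0^p2 * ((P^2)⁻¹ * I))^(1/p2) :=
        Real.rpow_le_rpow hint0 hIint (by positivity)
      calc normQ (fun y => ψ y) (fun y => φ y) s α2 q2 p2 j
          ≤ (A0^p2 * ((P^2)⁻¹ * I))^(1/p2) := h1
        _ = (A0^p2)^(1/p2) * ((P^2)⁻¹ * I)^(1/p2) :=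
            Real.mul_rpow (Real.rpow_nonneg hA00 _) (mul_nonneg (by positivity) hI0)
        _ = A0 * ((P^2)⁻¹ * I)^(1/p2) := by
            rw [← Real.rpow_mul hA00, mul_one_div, div_self hp2.ne', Real.rpow_one]
    -- final exponent computation
    set S : ℝ := (j:ℝ)*(1/q2) + 3*(j:ℝ)*α2 + es + (j:ℝ) + (-(2*(j:ℝ)))*(1/p2) with hS
    have e1 : (4*P)^(1/q2) = 4^(1/q2) * (2:ℝ)^((j:ℝ)*(1/q2)) := by
      rw [Real.mul_rpow (by norm_num) hP0.le, hPr, ← Real.rpow_mul (by norm_num)]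
    have hP2 : P^2 = (2:ℝ)^(2*(j:ℝ)) := by
      rw [hPr, ← Real.rpow_natCast ((2:ℝ)^((j:ℝ))) 2, ← Real.rpow_mul (by norm_num)]
      norm_num [mul_comm]
    have e2 : ((P^2)⁻¹)^(1/p2) = (2:ℝ)^((-(2*(j:ℝ)))*(1/p2)) := by
      rw [hP2, ← Real.rpow_neg (by norm_num), ← Real.rpow_mul (by norm_num)]
    have hcollect : A0 * ((P^2)⁻¹ * I)^(1/p2)
        = (K * 4^(1/q2) * I^(1/p2)) * (2:ℝ)^S := by
      rw [Real.mul_rpow (by positivity) hI0, hA0, hc0def, e1, e2, hs j, ← hes, hPr, hS]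
      rw [Real.rpow_add (by norm_num), Real.rpow_add (by norm_num),
        Real.rpow_add (by norm_num), Real.rpow_add (by norm_num)]
      ring
    have hSle : S ≤ (j:ℝ) * E := by
      have hSeq : S = (j:ℝ) * (E - 1 - 1/p2) := by rw [hS, hes, hE]; ring
      rw [hSeq]
      apply mul_le_mul_of_nonneg_left _ (Nat.cast_nonneg j)
      have : 0 < 1/p2 := by positivity
      linarith
    have h2S : (2:ℝ)^S ≤ (2:ℝ)^((j:ℝ)*E) :=
      Real.rpow_le_rpow_of_exponent_le (by norm_num) hSle
    calc normQ (fun y => ψ y) (fun y => φ y) s α2 q2 p2 j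
        ≤ A0 * ((P^2)⁻¹ * I)^(1/p2) := hnormQ
      _ = (K * 4^(1/q2) * I^(1/p2)) * (2:ℝ)^S := hcollect
      _ ≤ (K * 4^(1/q2) * I^(1/p2)) * (2:ℝ)^((j:ℝ)*E) := by
          apply mul_le_mul_of_nonneg_left h2S
          exact mul_nonneg (mul_nonneg hK0 (Real.rpow_nonneg (by norm_num) _))
            (Real.rpow_nonneg hI0 _)
      _ ≤ C * (2:ℝ)^((j:ℝ)*E) := by
          apply mul_le_mul_of_nonneg_right _ (Real.rpow_nonneg (by norm_num) _)
          rw [hC]; linarith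
  refine ⟨⟨C, hC0, key⟩, ?_⟩
  have hEneg : E < 0 := by rw [hE]; linarith
  have h2E : (2:ℝ)^E < 1 := Real.rpow_lt_one_of_one_lt_of_neg one_lt_two hEneg
  have h2E0 : 0 ≤ (2:ℝ)^E := Real.rpow_nonneg (by norm_num) E
  have hT : Tendsto (fun j : ℕ => C * ((2:ℝ)^E)^j) atTop (nhds 0) := by
    have h := (tendsto_pow_atTop_nhds_zero_of_lt_one h2E0 h2E).const_mul C
    simpa using h
  have heq : (fun j : ℕ => C * (2:ℝ)^((j:ℝ)*E)) = fun j : ℕ => C * ((2:ℝ)^E)^j := by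
    funext j
    congr 1
    rw [← Real.rpow_natCast ((2:ℝ)^E) j, ← Real.rpow_mul (by norm_num), mul_comm]
  exact squeeze_zero hnq key (heq ▸ hT)
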